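/- arXiv:1511.07903 — 3 statements merged into one kernel-verified Lean document; each statement's English description precedes it below -/
import Mathlib

section
/- Let K independent homogeneous PPPs Φ_1,…,Φ_K on ℝ² have intensities λ_1,…,λ_K, with positive weights τ_1,…,τ_K. Let R_j be the distance from the origin to the nearest point of Φ_j. Then the probability that the i-th tier minimizes the weighted distance, P(τ_i R_i ≤ τ_j R_j for all j ≠ i), equals λ_i / (Σ_{j=1}^K (τ_i²/τ_j²) λ_j). -/
open MeasureTheory ProbabilityTheory Real Set
open scoped ENNReal

noncomputable def myDens (a : ℝ) : ℝ → ℝ≥0∞ :=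
  (Ioi (0:ℝ)).indicator fun r => ENNReal.ofReal (2 * a * r * Real.exp (-(a * r ^ 2)))

lemma myDeriv (a r : ℝ) :
    HasDerivAt (fun r : ℝ => -Real.exp (-(a * r ^ 2))) (2 * a * r * Real.exp (-(a * r ^ 2))) r := by
  have h1 : HasDerivAt (fun r : ℝ => -(a * r ^ 2)) (-(a * (2 * r))) r := by
    have h0 : HasDerivAt (fun r : ℝ => a * r ^ 2) (a * (2 * r)) r := by
      simpa using (hasDerivAt_pow 2 r).const_mul a
    exact h0.neg
  have := (h1.exp).neg
  exact this.congr_deriv (by ring)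

lemma myTendsto (a : ℝ) (ha : 0 < a) :
    Filter.Tendsto (fun r : ℝ => -Real.exp (-(a * r ^ 2))) Filter.atTop (nhds 0) := by
  have h : Filter.Tendsto (fun r : ℝ => -(a * r ^ 2)) Filter.atTop Filter.atBot := by
    apply Filter.tendsto_neg_atBot_iff.2
    exact (Filter.tendsto_pow_atTop two_ne_zero).const_mul_atTop ha
  simpa using (Real.tendsto_exp_atBot.comp h).neg

lemma myIntegrable (a : ℝ) (ha : 0 < a) :
    IntegrableOn (fun r : ℝ => 2 * a * r * Real.exp (-(a * r ^ 2))) (Ioi 0) := by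
  refine integrableOn_Ioi_deriv_of_nonneg' (fun x _ => myDeriv a x) ?_ (myTendsto a ha)
  intro x hx
  have hx' : (0:ℝ) < x := hx
  positivity

lemma myFTC (a : ℝ) (ha : 0 < a) :
    ∫ r in Ioi (0:ℝ), 2 * a * r * Real.exp (-(a * r ^ 2)) = 1 := by
  have := integral_Ioi_of_hasDerivAt_of_nonneg' (g := fun r : ℝ => -Real.exp (-(a * r ^ 2)))
    (fun x _ => myDeriv a x) (fun x hx => by have hx' : (0:ℝ) < x := hx; positivity) (myTendsto a ha)
  simpa using this

lemma myFTCfin (a : ℝ) (ha : 0 < a) (b : ℝ) (hb : 0 ≤ b) :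
    ∫ r in Ioc (0:ℝ) b, 2 * a * r * Real.exp (-(a * r ^ 2)) = 1 - Real.exp (-(a * b ^ 2)) := by
  rw [← intervalIntegral.integral_of_le hb]
  have := intervalIntegral.integral_eq_sub_of_hasDerivAt (f := fun r : ℝ => -Real.exp (-(a * r ^ 2)))
    (f' := fun r => 2 * a * r * Real.exp (-(a * r ^ 2))) (a := 0) (b := b)
    (fun x _ => myDeriv a x) ?_
  · rw [this]; simp; ring
  · apply Continuous.intervalIntegrable; continuity

lemma mySurvival {Ω : Type*} [MeasureSpace Ω] [IsProbabilityMeasure (ℙ : Measure Ω)]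
    {X : Ω → ℝ} (hm : Measurable X) {a : ℝ} (ha : 0 ≤ a)
    (hcdf : ∀ r : ℝ, 0 ≤ r → ℙ {ω | X ω ≤ r} = ENNReal.ofReal (1 - Real.exp (-(a * r ^ 2))))
    (c : ℝ) (hc : 0 < c) :
    ℙ {ω | c ≤ X ω} = ENNReal.ofReal (Real.exp (-(a * c ^ 2))) := by
  have hlt : ℙ {ω | X ω < c} = ENNReal.ofReal (1 - Real.exp (-(a * c ^ 2))) := by
    have hU : {ω | X ω < c} = ⋃ n : ℕ, {ω | X ω ≤ c - (1:ℝ)/(n+1)} := by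
      ext ω
      simp only [mem_setOf_eq, mem_iUnion]
      constructor
      · intro h
        obtain ⟨n, hn⟩ := exists_nat_one_div_lt (sub_pos.2 h)
        exact ⟨n, by linarith [hn]⟩
      · rintro ⟨n, hn⟩
        have : (0:ℝ) < 1/(n+1) := by positivity
        linarith
    have hmono : Monotone fun n : ℕ => {ω | X ω ≤ c - (1:ℝ)/(n+1)} := by
      intro m n hmn ω hω
      have hc1 : (m:ℝ) ≤ n := Nat.cast_le.2 hmn
      have h1 : (1:ℝ)/(n+1) ≤ 1/(m+1) := by
        apply one_div_le_one_div_of_le (by positivity)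
        linarith
      simp only [mem_setOf_eq] at *
      linarith
    have htend := tendsto_measure_iUnion_atTop (μ := (ℙ : Measure Ω)) hmono
    have htend2 : Filter.Tendsto (fun n : ℕ => ℙ {ω | X ω ≤ c - (1:ℝ)/(n+1)})
        Filter.atTop (nhds (ENNReal.ofReal (1 - Real.exp (-(a * c ^ 2))))) := by
      have hev : ∀ᶠ n : ℕ in Filter.atTop,
          ℙ {ω | X ω ≤ c - (1:ℝ)/(n+1)} =
            ENNReal.ofReal (1 - Real.exp (-(a * (c - (1:ℝ)/(n+1)) ^ 2))) := by
        obtain ⟨N, hN⟩ := exists_nat_one_div_lt hc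
        refine Filter.eventually_atTop.2 ⟨N, fun n hn => ?_⟩
        apply hcdf
        have hc1 : (N:ℝ) ≤ n := Nat.cast_le.2 hn
        have h1 : (1:ℝ)/(n+1) ≤ 1/(N+1) := by
          apply one_div_le_one_div_of_le (by positivity)
          linarith
        linarith
      have hbase : Filter.Tendsto (fun n : ℕ => c - (1:ℝ)/(n+1)) Filter.atTop (nhds c) := by
        simpa using (tendsto_one_div_add_atTop_nhds_zero_nat).const_sub c
      have hcont : Continuous fun x : ℝ => ENNReal.ofReal (1 - Real.exp (-(a * x ^ 2))) := by
        exact ENNReal.continuous_ofReal.comp (by continuity)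
      have := (hcont.tendsto c).comp hbase
      exact Filter.Tendsto.congr' (hev.mono fun n h => h.symm) this
    have huniq := tendsto_nhds_unique htend htend2
    rw [← hU] at huniq
    exact huniq
  have hcompl : {ω | c ≤ X ω} = {ω | X ω < c}ᶜ := by
    ext ω; simp [not_lt]
  rw [hcompl, measure_compl (by exact measurableSet_lt hm measurable_const) (measure_ne_top _ _),
    hlt, measure_univ]
  rw [← ENNReal.ofReal_one, ← ENNReal.ofReal_sub _ (by nlinarith [Real.exp_pos (-(a * c ^ 2)), Real.exp_le_one_iff.2 (by nlinarith : -(a*c^2) ≤ 0)])]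
  congr 1
  have := Real.exp_pos (-(a * c ^ 2))
  ring_nf


lemma myLaw {Ω : Type*} [MeasureSpace Ω] [IsProbabilityMeasure (ℙ : Measure Ω)]
    {X : Ω → ℝ} (hm : Measurable X) {a : ℝ} (ha : 0 < a)
    (hcdf : ∀ r : ℝ, 0 ≤ r → ℙ {ω | X ω ≤ r} = ENNReal.ofReal (1 - Real.exp (-(a * r ^ 2)))) :
    Measure.map X ℙ = volume.withDensity (myDens a) := by
  have hmap : IsFiniteMeasure (Measure.map X ℙ) :=
    by have := Measure.isProbabilityMeasure_map hm.aemeasurable (μ := ℙ); infer_instance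
  refine Measure.ext_of_Iic _ _ fun b => ?_
  rw [Measure.map_apply hm measurableSet_Iic,
    withDensity_apply _ measurableSet_Iic]
  have hind : ∫⁻ r in Iic b, myDens a r
      = ∫⁻ r in Ioc 0 b, ENNReal.ofReal (2 * a * r * Real.exp (-(a * r ^ 2))) := by
    rw [myDens, lintegral_indicator measurableSet_Ioi _, Measure.restrict_restrict measurableSet_Ioi, Set.Ioi_inter_Iic]
  rw [hind]
  by_cases hb : 0 ≤ b
  · have hint := (myIntegrable a ha).mono_set (Ioc_subset_Ioi_self : Ioc (0:ℝ) b ⊆ Ioi 0)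
    rw [← ofReal_integral_eq_lintegral_ofReal hint ?_]
    · rw [myFTCfin a ha b hb]
      exact hcdf b hb
    · filter_upwards [ae_restrict_mem measurableSet_Ioc] with x hx
      have hx' : (0:ℝ) < x := hx.1
      positivity
  · push_neg at hb
    rw [Set.Ioc_eq_empty (by linarith)]
    simp only [Measure.restrict_empty, lintegral_zero_measure]
    have h0 : ℙ {ω | X ω ≤ (0:ℝ)} = 0 := by
      rw [hcdf 0 le_rfl]; simp
    refine measure_mono_null ?_ h0
    intro ω hω
    exact le_trans hω hb.le

lemma myIic0 {Ω : Type*} [MeasureSpace Ω] [IsProbabilityMeasure (ℙ : Measure Ω)]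
    {X : Ω → ℝ} (hm : Measurable X) {a : ℝ} (ha : 0 < a)
    (hcdf : ∀ r : ℝ, 0 ≤ r → ℙ {ω | X ω ≤ r} = ENNReal.ofReal (1 - Real.exp (-(a * r ^ 2)))) :
    (Measure.map X ℙ) (Iic 0) = 0 := by
  rw [Measure.map_apply hm measurableSet_Iic]
  have := hcdf 0 le_rfl
  simpa [Set.preimage, Set.mem_Iic] using this

/-- For `K` independent tiers with nearest-point distances `R_j`
(distributed as the nearest-point distance of a homogeneous PPP of intensity `λ_j`,
i.e. with CDF `1 - exp(-π λ_j r²)`), and positive association weights `τ_j`, the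
probability that tier `i` minimizes the weighted distance is
`λ_i / (Σ_j (τ_i²/τ_j²) λ_j)`. -/
theorem stmt1
    {Ω : Type*} [MeasureSpace Ω] [IsProbabilityMeasure (ℙ : Measure Ω)]
    {K : ℕ} (hK : 0 < K)
    (lam τ : Fin K → ℝ) (hlam : ∀ j, 0 < lam j) (hτ : ∀ j, 0 < τ j)
    (R : Fin K → Ω → ℝ)
    (hmeas : ∀ j, Measurable (R j))
    (hindep : iIndepFun R ℙ)
    (hcdf : ∀ j, ∀ r : ℝ, 0 ≤ r →
      ℙ {ω | R j ω ≤ r} = ENNReal.ofReal (1 - Real.exp (-(π * lam j * r ^ 2))))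
    (i : Fin K) :
    ℙ {ω | ∀ j, j ≠ i → τ i * R i ω ≤ τ j * R j ω}
      = ENNReal.ofReal (lam i / ∑ j, (τ i) ^ 2 / (τ j) ^ 2 * lam j) := by
  have : Nonempty (Fin K) := ⟨⟨0, hK⟩⟩
  set S : ℝ := ∑ j, (τ i) ^ 2 / (τ j) ^ 2 * lam j with hSdef
  have hS : 0 < S := Finset.sum_pos (fun j _ => by have := hlam j; have := hτ i; have := hτ j; positivity) ⟨i, Finset.mem_univ i⟩
  set T : Finset (Fin K) := {i}ᶜ with hTdef
  set Y : Ω → ({x // x ∈ T} → ℝ) := fun ω j => R j.1 ω with hYdef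
  have hYmeas : Measurable Y := measurable_pi_lambda _ fun j => hmeas j.1
  -- independence of R i and Y
  have hXY : IndepFun (R i) Y ℙ := by
    have hIF := hindep.indepFun_finset {i} T disjoint_compl_right hmeas
    have := hIF.comp (φ := fun p : ({x // x ∈ ({i} : Finset (Fin K))} → ℝ) =>
      p ⟨i, Finset.mem_singleton_self i⟩) (ψ := id) (measurable_pi_apply _ : Measurable fun p : ({x // x ∈ ({i} : Finset (Fin K))} → ℝ) =>
        p ⟨i, Finset.mem_singleton_self i⟩) measurable_id
    exact this
  -- the event as preimage
  set C : Set (ℝ × ({x // x ∈ T} → ℝ)) :=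
    {p | ∀ j : {x // x ∈ T}, τ i * p.1 ≤ τ j.1 * p.2 j} with hCdef
  have hC : MeasurableSet C := by
    have : C = ⋂ j : {x // x ∈ T}, {p : ℝ × ({x // x ∈ T} → ℝ) | τ i * p.1 ≤ τ j.1 * p.2 j} := by
      ext p; simp [hCdef, Set.mem_iInter]
    rw [this]
    exact MeasurableSet.iInter fun j => measurableSet_le (measurable_fst.const_mul _)
      (((measurable_pi_apply j).comp measurable_snd).const_mul _)
  have hA : {ω | ∀ j, j ≠ i → τ i * R i ω ≤ τ j * R j ω} = (fun ω => (R i ω, Y ω)) ⁻¹' C := by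
    ext ω
    simp only [Set.mem_setOf_eq, Set.mem_preimage, hCdef, hYdef]
    constructor
    · intro h j
      exact h j.1 (Finset.notMem_singleton.mp (Finset.mem_compl.mp j.2))
    · intro h j hj
      exact h ⟨j, Finset.mem_compl.mpr (Finset.notMem_singleton.mpr hj)⟩
  rw [hA, ← Measure.map_apply ((hmeas i).prodMk hYmeas) hC,
    (indepFun_iff_map_prod_eq_prod_map_map (hmeas i).aemeasurable hYmeas.aemeasurable).1 hXY,
    Measure.prod_apply hC]
  -- a.e. replace the inner measure by an explicit function
  have hai : (0:ℝ) < π * lam i := by have := hlam i; positivity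
  set φ : ℝ → ℝ≥0∞ := fun x => ENNReal.ofReal (Real.exp (-(π * (S - lam i) * x ^ 2))) with hφdef
  have hae : ∀ᵐ x ∂(Measure.map (R i) ℙ), x ∈ Ioi (0:ℝ) := by
    rw [ae_iff]
    refine measure_mono_null ?_ (myIic0 (hmeas i) hai (hcdf i))
    intro x hx
    simpa using not_lt.1 (by simpa using hx)
  have hinner : ∀ x ∈ Ioi (0:ℝ),
      (Measure.map Y ℙ) (Prod.mk x ⁻¹' C) = φ x := by
    intro x hx
    have hx' : (0:ℝ) < x := hx
    rw [Measure.map_apply hYmeas (measurable_prodMk_left hC)]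
    have hpre : Y ⁻¹' (Prod.mk x ⁻¹' C) = ⋂ j ∈ T, (R j) ⁻¹' (Ici (τ i * x / τ j)) := by
      ext ω
      simp only [Set.mem_preimage, hCdef, Set.mem_setOf_eq, Set.mem_iInter, Set.mem_Ici, hYdef]
      constructor
      · intro h j hj
        rw [div_le_iff₀ (hτ j)]
        simpa [mul_comm] using h ⟨j, hj⟩
      · intro h j
        have := h j.1 j.2
        rw [div_le_iff₀ (hτ j.1)] at this
        exact this.trans_eq (mul_comm _ _)
    rw [hpre, hindep.meas_biInter (fun j hj => ⟨Ici _, measurableSet_Ici, rfl⟩)]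
    have hterm : ∀ j ∈ T, ℙ ((R j) ⁻¹' (Ici (τ i * x / τ j)))
        = ENNReal.ofReal (Real.exp (-(π * lam j * (τ i * x / τ j) ^ 2))) := by
      intro j _
      have hc : 0 < τ i * x / τ j := by have := hτ i; have := hτ j; positivity
      have := mySurvival (hmeas j) (by have := hlam j; positivity) (hcdf j) _ hc
      exact this
    rw [Finset.prod_congr rfl hterm,
      ← ENNReal.ofReal_prod_of_nonneg (fun _ _ => (Real.exp_pos _).le), ← Real.exp_sum]
    congr 2
    have h1 : ∀ j, -(π * lam j * (τ i * x / τ j) ^ 2)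
        = -((π * ((τ i) ^ 2 / (τ j) ^ 2 * lam j)) * x ^ 2) := by
      intro j
      have hj := (hτ j).ne'
      field_simp
    rw [Finset.sum_congr rfl (fun j _ => h1 j)]
    have h2 : ∑ j ∈ T, (τ i) ^ 2 / (τ j) ^ 2 * lam j = S - lam i := by
      have h3 := Finset.sum_compl_add_sum ({i} : Finset (Fin K))
        (fun j => (τ i) ^ 2 / (τ j) ^ 2 * lam j)
      rw [Finset.sum_singleton] at h3
      have hτi : (τ i) ^ 2 / (τ i) ^ 2 * lam i = lam i := by
        rw [div_self (by have := hτ i; positivity), one_mul]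
      rw [hτi] at h3
      rw [hTdef]
      linarith
    rw [Finset.sum_neg_distrib, ← Finset.sum_mul, ← Finset.mul_sum, h2]
  have haeeq : (fun x => (Measure.map Y ℙ) (Prod.mk x ⁻¹' C)) =ᵐ[Measure.map (R i) ℙ] φ :=
    hae.mono fun x hx => hinner x hx
  rw [lintegral_congr_ae haeeq, myLaw (hmeas i) hai (hcdf i),
    lintegral_withDensity_eq_lintegral_mul _ (by
      exact Measurable.indicator (by fun_prop) measurableSet_Ioi) (by fun_prop)]
  have hsplit : (myDens (π * lam i)) * φ = (Ioi (0:ℝ)).indicator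
      (fun x => ENNReal.ofReal ((lam i / S) *
        (2 * (π * S) * x * Real.exp (-((π * S) * x ^ 2))))) := by
    funext x
    by_cases hx : x ∈ Ioi (0:ℝ)
    · have hx' : (0:ℝ) < x := hx
      simp only [Pi.mul_apply, myDens, Set.indicator_of_mem hx, hφdef]
      rw [← ENNReal.ofReal_mul (by have := hlam i; positivity)]
      congr 1
      rw [mul_assoc (2 * (π * lam i) * x), ← Real.exp_add]
      have hexp : -(π * lam i * x ^ 2) + -(π * (S - lam i) * x ^ 2) = -(π * S * x ^ 2) := by ring
      rw [hexp]
      have hSne : S ≠ 0 := hS.ne'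
      field_simp
    · simp [myDens, Set.indicator_of_notMem hx, hx]
  have hπS : (0:ℝ) < π * S := by positivity
  have hInt : Integrable (fun x : ℝ => lam i / S *
      (2 * (π * S) * x * Real.exp (-((π * S) * x ^ 2)))) (volume.restrict (Ioi 0)) :=
    (myIntegrable (π * S) hπS).const_mul _
  have hNN : 0 ≤ᵐ[volume.restrict (Ioi (0:ℝ))] fun x : ℝ => lam i / S *
      (2 * (π * S) * x * Real.exp (-((π * S) * x ^ 2))) := by
    filter_upwards [ae_restrict_mem measurableSet_Ioi] with x hx
    have hx' : (0:ℝ) < x := hx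
    have := (hlam i).le
    positivity
  rw [hsplit, lintegral_indicator measurableSet_Ioi,
    ← ofReal_integral_eq_lintegral_ofReal hInt hNN, MeasureTheory.integral_const_mul,
    myFTC (π * S) hπS, mul_one]
end

section
/- With the same setup, conditioned on the event {τ_i R_i ≤ τ_j R_j ∀ j ≠ i}, the serving distance R^(i) = R_i has distribution F_{R^(i)}(r) = 1 - exp(-π λ̄_i r²), where λ̄_i = Σ_{j=1}^K (τ_i²/τ_j²) λ_j; i.e., the conditional PDF is f_{R^(i)}(r) = 2π λ̄_i r exp(-π λ̄_i r²) for r ≥ 0. -/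
set_option maxHeartbeats 1000000
open MeasureTheory ProbabilityTheory Real Set

lemma stmt2_deriv (c : ℝ) (r : ℝ) :
    HasDerivAt (fun u : ℝ => 1 - Real.exp (-(c * u ^ 2)))
      (2 * c * r * Real.exp (-(c * r ^ 2))) r := by
  have h1 : HasDerivAt (fun u : ℝ => -(c * u ^ 2)) (-(c * (2 * r))) r := by
    have := (hasDerivAt_pow 2 r).const_mul c
    simpa [Pi.neg_def] using this.neg
  have h2 := (h1.exp).const_sub 1
  refine h2.congr_deriv ?_
  ring

lemma stmt2_ftc (a c : ℝ) (hc : 0 < c) (r : ℝ) :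
    ∫ s in (0:ℝ)..r, a * s * Real.exp (-(c * s ^ 2))
      = a / (2 * c) * (1 - Real.exp (-(c * r ^ 2))) := by
  have key : ∀ s : ℝ, HasDerivAt (fun u : ℝ => -(a / (2 * c)) * Real.exp (-(c * u ^ 2)))
      (a * s * Real.exp (-(c * s ^ 2))) s := by
    intro s
    have h1 : HasDerivAt (fun u : ℝ => -(c * u ^ 2)) (-(c * (2 * s))) s := by
      have := (hasDerivAt_pow 2 s).const_mul c
      simpa [Pi.neg_def] using this.neg
    have h2 := (h1.exp).const_mul (-(a / (2 * c)))
    refine h2.congr_deriv ?_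
    field_simp
  have hcont : Continuous fun s : ℝ => a * s * Real.exp (-(c * s ^ 2)) := by
    continuity
  rw [intervalIntegral.integral_eq_sub_of_hasDerivAt (fun s _ => key s)
      (hcont.intervalIntegrable 0 r)]
  simp [Real.exp_zero]
  ring

/-- With `K` independent tiers with nearest-point distances `R_j`
(CDF `1 - exp(-π λ_j r²)`) and positive weights `τ_j`, conditioned on the association
event `{τ_i R_i ≤ τ_j R_j ∀ j ≠ i}`, the serving distance `R_i` has CDF
`1 - exp(-π λ̄_i r²)` where `λ̄_i = Σ_j (τ_i²/τ_j²) λ_j`; i.e. its conditional PDF is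
`2π λ̄_i r exp(-π λ̄_i r²)` for `r ≥ 0`. -/
theorem stmt2
    {Ω : Type*} [MeasureSpace Ω] [IsProbabilityMeasure (ℙ : Measure Ω)]
    {K : ℕ} (hK : 0 < K)
    (lam τ : Fin K → ℝ) (hlam : ∀ j, 0 < lam j) (hτ : ∀ j, 0 < τ j)
    (R : Fin K → Ω → ℝ)
    (hmeas : ∀ j, Measurable (R j))
    (hindep : iIndepFun R ℙ)
    (hcdf : ∀ j, ∀ r : ℝ, 0 ≤ r →
      ℙ {ω | R j ω ≤ r} = ENNReal.ofReal (1 - Real.exp (-(π * lam j * r ^ 2))))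
    (i : Fin K)
    (lamBar : ℝ) (hlamBar : lamBar = ∑ j, (τ i) ^ 2 / (τ j) ^ 2 * lam j) :
    (∀ r : ℝ, 0 ≤ r →
        ProbabilityTheory.cond ℙ {ω | ∀ j, j ≠ i → τ i * R i ω ≤ τ j * R j ω}
            {ω | R i ω ≤ r}
          = ENNReal.ofReal (1 - Real.exp (-(π * lamBar * r ^ 2))))
      ∧ (∀ r : ℝ, 0 ≤ r →
        HasDerivAt (fun u : ℝ => 1 - Real.exp (-(π * lamBar * u ^ 2)))
          (2 * π * lamBar * r * Real.exp (-(π * lamBar * r ^ 2))) r) := by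
  have hπ : (0:ℝ) < π := Real.pi_pos
  -- basic positivity
  set T : Finset (Fin K) := ({i} : Finset (Fin K))ᶜ with hT
  set cc : ℝ := ∑ j ∈ T, lam j * (τ i / τ j) ^ 2 with hcc
  have hcc0 : 0 ≤ cc := Finset.sum_nonneg fun j _ =>
    mul_nonneg (hlam j).le (sq_nonneg _)
  have hsum : lam i + cc = lamBar := by
    rw [hlamBar, ← Finset.sum_compl_add_sum ({i} : Finset (Fin K))
      (fun j => (τ i) ^ 2 / (τ j) ^ 2 * lam j)]
    rw [Finset.sum_singleton, div_self (pow_ne_zero 2 (hτ i).ne'), one_mul]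
    rw [add_comm]
    congr 1
    refine Finset.sum_congr rfl fun j _ => ?_
    rw [div_pow]
    ring
  have hlamBar0 : 0 < lamBar := by rw [← hsum]; linarith [hlam i]
  have hq0 : 0 < lam i / lamBar := div_pos (hlam i) hlamBar0
  -- zero cdf at 0
  have hzero : ∀ j, ℙ {ω | R j ω ≤ (0:ℝ)} = 0 := by
    intro j
    rw [hcdf j 0 le_rfl]
    norm_num
  -- survival function
  have hsurv : ∀ j (a : ℝ), 0 ≤ a →
      ℙ {ω | a ≤ R j ω} = ENNReal.ofReal (Real.exp (-(π * lam j * a ^ 2))) := by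
    intro j a ha
    have hmlt : MeasurableSet {ω | R j ω < a} := measurableSet_lt (hmeas j) measurable_const
    have hlt : ℙ {ω | R j ω < a} = ENNReal.ofReal (1 - Real.exp (-(π * lam j * a ^ 2))) := by
      rcases eq_or_lt_of_le ha with h0 | h0
      · have hsub : ℙ {ω | R j ω < a} ≤ ℙ {ω | R j ω ≤ (0:ℝ)} := by
          apply measure_mono
          intro ω hω
          simp only [mem_setOf_eq] at *
          rw [← h0] at hω
          exact hω.le
        rw [hzero j] at hsub
        rw [le_zero_iff.mp hsub, ← h0]
        norm_num
      · refine le_antisymm ?_ ?_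
        · calc ℙ {ω | R j ω < a} ≤ ℙ {ω | R j ω ≤ a} :=
                measure_mono fun ω (h : R j ω < a) => le_of_lt h
            _ = _ := hcdf j a ha
        · have hbn : ∀ n : ℕ, (0:ℝ) ≤ a - a / (n + 1) := by
            intro n
            have h1 : a / ((n:ℝ) + 1) ≤ a := by
              rw [div_le_iff₀ (by positivity)]
              nlinarith [Nat.cast_nonneg (α := ℝ) n]
            linarith
          have hblt : ∀ n : ℕ, a - a / (n + 1) < a := by
            intro n
            have : 0 < a / ((n:ℝ) + 1) := by positivity
            linarith
          have hle : ∀ n : ℕ,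
              ENNReal.ofReal (1 - Real.exp (-(π * lam j * (a - a / (n + 1)) ^ 2)))
                ≤ ℙ {ω | R j ω < a} := by
            intro n
            rw [← hcdf j _ (hbn n)]
            exact measure_mono fun ω h => lt_of_le_of_lt h (hblt n)
          have hxa : Filter.Tendsto (fun n : ℕ => a - a / (n + 1)) Filter.atTop (nhds a) := by
            have h1 : Filter.Tendsto (fun n : ℕ => a / ((n:ℝ) + 1)) Filter.atTop (nhds 0) := by
              apply Filter.Tendsto.div_atTop (tendsto_const_nhds)
              exact Filter.tendsto_atTop_add_const_right _ 1 tendsto_natCast_atTop_atTop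
            simpa using (tendsto_const_nhds (x := a)).sub h1
          have hcontf : Continuous fun x : ℝ => 1 - Real.exp (-(π * lam j * x ^ 2)) := by
            continuity
          have htend := ENNReal.tendsto_ofReal ((hcontf.tendsto a).comp hxa)
          exact le_of_tendsto' htend hle
    have hcompl : {ω | a ≤ R j ω} = {ω | R j ω < a}ᶜ := by
      ext ω; simp [not_lt]
    have hexp1 : Real.exp (-(π * lam j * a ^ 2)) ≤ 1 := by
      apply Real.exp_le_one_iff.mpr
      have : 0 ≤ π * lam j * a ^ 2 := mul_nonneg (mul_nonneg hπ.le (hlam j).le) (sq_nonneg a)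
      linarith
    rw [hcompl, prob_compl_eq_one_sub hmlt, hlt, ← ENNReal.ofReal_one,
      ← ENNReal.ofReal_sub _ (by linarith)]
    norm_num
  -- the random vector of the other coordinates
  set Y : Ω → (T → ℝ) := fun ω j => R j ω with hY
  have hYmeas : Measurable Y := measurable_pi_lambda _ fun j => hmeas j
  have hXY : IndepFun (R i) Y ℙ := by
    have h := hindep.indepFun_finset {i} T disjoint_compl_right hmeas
    exact h.comp (measurable_pi_apply
      (⟨i, Finset.mem_singleton_self i⟩ : ({i} : Finset (Fin K)))) measurable_id
  have hmapXY : Measure.map (fun ω => (R i ω, Y ω)) ℙ = (Measure.map (R i) ℙ).prod (Measure.map Y ℙ) :=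
    (indepFun_iff_map_prod_eq_prod_map_map (hmeas i).aemeasurable hYmeas.aemeasurable).mp hXY
  -- the explicit density measure
  set g : ℝ → ℝ := fun s => 2 * π * lam i * s * Real.exp (-(π * lam i * s ^ 2)) with hg
  have hgcont : Continuous g := by
    apply Continuous.mul
    · exact continuous_const.mul continuous_id
    · exact Real.continuous_exp.comp ((continuous_const.mul (continuous_pow 2)).neg)
  have hgmeas : Measurable fun s => ENNReal.ofReal (g s) :=
    ENNReal.measurable_ofReal.comp hgcont.measurable
  set ν : Measure ℝ := (volume.restrict (Ioi 0)).withDensity (fun s => ENNReal.ofReal (g s))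
    with hν
  have hν_apply : ∀ r : ℝ, ν (Iic r) = ∫⁻ s in Ioc 0 r, ENNReal.ofReal (g s) := by
    intro r
    rw [hν, withDensity_apply _ measurableSet_Iic, Measure.restrict_restrict measurableSet_Iic,
      Iic_inter_Ioi, Ioc]
  have hν_val : ∀ r : ℝ, 0 ≤ r →
      ν (Iic r) = ENNReal.ofReal (1 - Real.exp (-(π * lam i * r ^ 2))) := by
    intro r hr
    rw [hν_apply r]
    have hnn : 0 ≤ᵐ[volume.restrict (Ioc 0 r)] g := by
      refine (ae_restrict_iff' measurableSet_Ioc).mpr (Filter.Eventually.of_forall ?_)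
      intro s hs
      have : (0:ℝ) < s := hs.1
      have h1 : 0 ≤ 2 * π * lam i * s :=
        mul_nonneg (mul_nonneg (by linarith) (hlam i).le) this.le
      exact mul_nonneg h1 (Real.exp_pos _).le
    rw [← ofReal_integral_eq_lintegral_ofReal (hgcont.integrableOn_Ioc) hnn,
      ← intervalIntegral.integral_of_le hr]
    have := stmt2_ftc (2 * π * lam i) (π * lam i) (mul_pos hπ (hlam i)) r
    rw [hg]
    simp only []
    rw [this]
    congr 1
    have h2 : (2 * π * lam i) / (2 * (π * lam i)) = 1 := by
      rw [div_eq_one_iff_eq (mul_pos two_pos (mul_pos hπ (hlam i))).ne']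
      ring
    rw [h2, one_mul]
  have hν_neg : ∀ r : ℝ, r < 0 → ν (Iic r) = 0 := by
    intro r hr
    rw [hν_apply r, Set.Ioc_eq_empty (by linarith), Measure.restrict_empty, lintegral_zero_measure]
  have hνfin : IsFiniteMeasure ν := by
    constructor
    have hU : (univ : Set ℝ) = ⋃ n : ℕ, Iic (n:ℝ) := by
      ext x
      simp only [mem_univ, mem_iUnion, mem_Iic, true_iff]
      exact exists_nat_ge x
    have hmono : Monotone fun n : ℕ => Iic (n:ℝ) :=
      fun m n hmn => Iic_subset_Iic.mpr (Nat.cast_le.mpr hmn)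
    have ht := tendsto_measure_iUnion_atTop (μ := ν) hmono
    rw [← hU] at ht
    have hle : ν univ ≤ 1 := by
      refine le_of_tendsto' ht fun n => ?_
      simp only [Function.comp_apply]
      rw [hν_val n (Nat.cast_nonneg n)]
      refine ENNReal.ofReal_le_one.mpr ?_
      have := (Real.exp_pos (-(π * lam i * (n:ℝ) ^ 2))).le
      linarith
    exact lt_of_le_of_lt hle ENNReal.one_lt_top
  have hmapX : Measure.map (R i) ℙ = ν := by
    haveI : IsProbabilityMeasure (Measure.map (R i) ℙ) :=
      Measure.isProbabilityMeasure_map (hmeas i).aemeasurable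
    haveI := hνfin
    refine MeasureTheory.Measure.ext_of_Iic _ _ fun r => ?_
    rw [Measure.map_apply (hmeas i) measurableSet_Iic]
    have hpre : R i ⁻¹' (Iic r) = {ω | R i ω ≤ r} := rfl
    rw [hpre]
    rcases le_or_gt 0 r with hr | hr
    · rw [hcdf i r hr, hν_val r hr]
    · rw [hν_neg r hr]
      have hsub : ℙ {ω | R i ω ≤ r} ≤ ℙ {ω | R i ω ≤ (0:ℝ)} :=
        measure_mono fun ω (h : R i ω ≤ r) => le_trans h hr.le
      rw [hzero i] at hsub
      exact le_zero_iff.mp hsub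
  -- slice measure of the other coordinates
  have hslice : ∀ s : ℝ, 0 ≤ s →
      (Measure.map Y ℙ) {y : T → ℝ | ∀ j : T, τ i * s ≤ τ (j : Fin K) * y j}
        = ENNReal.ofReal (Real.exp (-(π * cc * s ^ 2))) := by
    intro s hs
    have hsetm : MeasurableSet {y : T → ℝ | ∀ j : T, τ i * s ≤ τ (j : Fin K) * y j} := by
      have : {y : T → ℝ | ∀ j : T, τ i * s ≤ τ (j : Fin K) * y j}
          = ⋂ j : T, {y : T → ℝ | τ i * s ≤ τ (j : Fin K) * y j} := by
        ext y; simp [Set.mem_iInter]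
      rw [this]
      exact MeasurableSet.iInter fun j =>
        measurableSet_le measurable_const ((measurable_pi_apply j).const_mul _)
    rw [Measure.map_apply hYmeas hsetm]
    have hpre : Y ⁻¹' {y : T → ℝ | ∀ j : T, τ i * s ≤ τ (j : Fin K) * y j}
        = ⋂ j ∈ T, {ω | τ i * s ≤ τ j * R j ω} := by
      ext ω
      simp only [mem_preimage, mem_setOf_eq, mem_iInter, hY]
      exact ⟨fun h j hj => h ⟨j, hj⟩, fun h j => h j j.2⟩
    have hbi := hindep.meas_biInter (S := T)
      (s := fun j => {ω | τ i * s ≤ τ j * R j ω}) (fun j _ =>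
      ⟨{x | τ i * s ≤ τ j * x}, measurableSet_le measurable_const (measurable_id.const_mul _),
        rfl⟩)
    rw [hpre, hbi]
    have hterm : ∀ j ∈ T, ℙ {ω | τ i * s ≤ τ j * R j ω}
        = ENNReal.ofReal (Real.exp (-(π * lam j * (τ i * s / τ j) ^ 2))) := by
      intro j _
      have hseteq : {ω | τ i * s ≤ τ j * R j ω} = {ω | τ i * s / τ j ≤ R j ω} := by
        ext ω
        simp only [mem_setOf_eq]
        rw [div_le_iff₀ (hτ j), mul_comm (R j ω) (τ j)]
      rw [hseteq, hsurv j _ (div_nonneg (mul_nonneg (hτ i).le hs) (hτ j).le)]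
    rw [Finset.prod_congr rfl hterm,
      ← ENNReal.ofReal_prod_of_nonneg (fun j _ => (Real.exp_pos _).le), ← Real.exp_sum]
    congr 2
    have hterm2 : ∀ j ∈ T, -(π * lam j * (τ i * s / τ j) ^ 2)
        = lam j * (τ i / τ j) ^ 2 * (-(π * s ^ 2)) := by
      intro j _
      field_simp
    rw [Finset.sum_congr rfl hterm2, ← Finset.sum_mul, ← hcc]
    ring
  -- main joint probability
  set A : Set Ω := {ω | ∀ j, j ≠ i → τ i * R i ω ≤ τ j * R j ω} with hA
  have hAmeas : MeasurableSet A := by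
    rw [hA]
    have : {ω | ∀ j, j ≠ i → τ i * R i ω ≤ τ j * R j ω}
        = ⋂ j, ⋂ (_ : j ≠ i), {ω | τ i * R i ω ≤ τ j * R j ω} := by
      ext ω; simp [Set.mem_iInter]
    rw [this]
    exact MeasurableSet.iInter fun j => MeasurableSet.iInter fun _ =>
      measurableSet_le ((hmeas i).const_mul _) ((hmeas j).const_mul _)
  have hmain : ∀ r : ℝ, 0 ≤ r → ℙ (A ∩ {ω | R i ω ≤ r})
      = ENNReal.ofReal (lam i / lamBar * (1 - Real.exp (-(π * lamBar * r ^ 2)))) := by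
    intro r hr
    set S : Set (ℝ × (T → ℝ)) :=
      {p | p.1 ≤ r} ∩ ⋂ j : T, {p | τ i * p.1 ≤ τ (j : Fin K) * p.2 j} with hS
    have hSmeas : MeasurableSet S := by
      refine (measurableSet_le measurable_fst measurable_const).inter
        (MeasurableSet.iInter fun j => measurableSet_le (measurable_fst.const_mul _)
          (((measurable_pi_apply j).comp measurable_snd).const_mul _))
    have hpre : A ∩ {ω | R i ω ≤ r} = (fun ω => (R i ω, Y ω)) ⁻¹' S := by
      ext ω
      simp only [hA, hS, mem_inter_iff, mem_setOf_eq, mem_preimage, mem_iInter, hY]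
      have hmemT : ∀ j : Fin K, j ∈ T ↔ j ≠ i := by
        intro j
        rw [hT, Finset.mem_compl, Finset.mem_singleton]
      constructor
      · rintro ⟨h1, h2⟩
        exact ⟨h2, fun j => h1 j ((hmemT j).mp j.2)⟩
      · rintro ⟨h1, h2⟩
        refine ⟨fun j hj => h2 ⟨j, (hmemT j).mpr hj⟩, h1⟩
    rw [hpre, ← Measure.map_apply ((hmeas i).prodMk hYmeas) hSmeas, hmapXY,
      Measure.prod_apply hSmeas, hmapX, hν,
      lintegral_withDensity_eq_lintegral_mul _ hgmeas
        (measurable_measure_prodMk_left hSmeas)]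
    have hpt : ∀ s ∈ Ioi (0:ℝ),
        ((fun s => ENNReal.ofReal (g s)) * fun s => (Measure.map Y ℙ) (Prod.mk s ⁻¹' S)) s
          = Set.indicator (Iic r)
              (fun s => ENNReal.ofReal (g s * Real.exp (-(π * cc * s ^ 2)))) s := by
      intro s hs
      simp only [Pi.mul_apply]
      by_cases hsr : s ≤ r
      · have hsl : Prod.mk s ⁻¹' S = {y : T → ℝ | ∀ j : T, τ i * s ≤ τ (j : Fin K) * y j} := by
          ext y
          simp [hS, hsr, Set.mem_iInter]
        rw [hsl, hslice s (le_of_lt hs), Set.indicator_of_mem (show s ∈ Iic r from hsr)]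
        have hgs : 0 ≤ g s := by
          have hs' : (0:ℝ) < s := hs
          have h1 : 0 ≤ 2 * π * lam i := mul_nonneg (by linarith) (hlam i).le
          exact mul_nonneg (mul_nonneg h1 hs'.le) (Real.exp_pos _).le
        exact (ENNReal.ofReal_mul hgs).symm
      · have hsl : Prod.mk s ⁻¹' S = ∅ := by
          ext y
          simp [hS, hsr]
        rw [hsl, Set.indicator_of_notMem (show s ∉ Iic r from hsr)]
        simp
    rw [setLIntegral_congr_fun measurableSet_Ioi hpt,
      lintegral_indicator measurableSet_Iic _, Measure.restrict_restrict measurableSet_Iic,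
      Iic_inter_Ioi]
    have hcomb : ∀ s ∈ Ioc (0:ℝ) r, g s * Real.exp (-(π * cc * s ^ 2))
        = 2 * π * lam i * s * Real.exp (-(π * lamBar * s ^ 2)) := by
      intro s _
      rw [hg]
      simp only []
      rw [mul_assoc (2 * π * lam i * s), ← Real.exp_add]
      congr 2
      rw [← hsum]
      ring
    have hptc : ∀ s ∈ Ioc (0:ℝ) r,
        ENNReal.ofReal (g s * Real.exp (-(π * cc * s ^ 2)))
          = ENNReal.ofReal (2 * π * lam i * s * Real.exp (-(π * lamBar * s ^ 2))) :=
      fun s hs => by rw [hcomb s hs]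
    rw [setLIntegral_congr_fun measurableSet_Ioc hptc]
    have hnn : 0 ≤ᵐ[volume.restrict (Ioc 0 r)]
        fun s => 2 * π * lam i * s * Real.exp (-(π * lamBar * s ^ 2)) := by
      refine (ae_restrict_iff' measurableSet_Ioc).mpr (Filter.Eventually.of_forall ?_)
      intro s hs
      have h1 : 0 ≤ 2 * π * lam i * s :=
        mul_nonneg (mul_nonneg (by linarith) (hlam i).le) hs.1.le
      exact mul_nonneg h1 (Real.exp_pos _).le
    have hcont2 : Continuous fun s : ℝ => 2 * π * lam i * s * Real.exp (-(π * lamBar * s ^ 2)) := by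
      apply Continuous.mul
      · exact continuous_const.mul continuous_id
      · exact Real.continuous_exp.comp ((continuous_const.mul (continuous_pow 2)).neg)
    rw [← ofReal_integral_eq_lintegral_ofReal (hcont2.integrableOn_Ioc) hnn,
      ← intervalIntegral.integral_of_le hr,
      stmt2_ftc (2 * π * lam i) (π * lamBar) (mul_pos hπ hlamBar0) r]
    congr 1
    have h2 : (2 * π * lam i) / (2 * (π * lamBar)) = lam i / lamBar := by
      rw [div_eq_div_iff (mul_pos two_pos (mul_pos hπ hlamBar0)).ne' hlamBar0.ne']
      ring
    rw [h2]
  -- the probability of the association event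
  have hAval : ℙ A = ENNReal.ofReal (lam i / lamBar) := by
    have hUnion : A = ⋃ n : ℕ, (A ∩ {ω | R i ω ≤ (n:ℝ)}) := by
      ext ω
      simp only [mem_iUnion, mem_inter_iff]
      constructor
      · intro h
        obtain ⟨n, hn⟩ := exists_nat_ge (R i ω)
        exact ⟨n, h, hn⟩
      · rintro ⟨n, h, -⟩
        exact h
    have hmono : Monotone fun n : ℕ => A ∩ {ω | R i ω ≤ (n:ℝ)} := by
      intro m n hmn
      exact inter_subset_inter_right _
        (fun ω (h : R i ω ≤ (m:ℝ)) => le_trans h (Nat.cast_le.mpr hmn))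
    have ht := tendsto_measure_iUnion_atTop (μ := ℙ) hmono
    rw [← hUnion] at ht
    have ht2 : Filter.Tendsto (fun n : ℕ => ℙ (A ∩ {ω | R i ω ≤ (n:ℝ)}))
        Filter.atTop (nhds (ENNReal.ofReal (lam i / lamBar))) := by
      have heq : ∀ n : ℕ, ℙ (A ∩ {ω | R i ω ≤ (n:ℝ)})
          = ENNReal.ofReal (lam i / lamBar * (1 - Real.exp (-(π * lamBar * (n:ℝ) ^ 2)))) :=
        fun n => hmain n (Nat.cast_nonneg n)
      rw [funext heq]
      have hsq : Filter.Tendsto (fun n : ℕ => π * lamBar * (n:ℝ) ^ 2) Filter.atTop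
          Filter.atTop := by
        apply Filter.Tendsto.const_mul_atTop (mul_pos hπ hlamBar0)
        have h1 : Filter.Tendsto (fun n : ℕ => ((n:ℝ))) Filter.atTop Filter.atTop :=
          tendsto_natCast_atTop_atTop
        apply Filter.tendsto_atTop_mono _ h1
        intro n
        have : (n:ℝ) * 1 ≤ (n:ℝ) * (n:ℝ) ∨ (n:ℝ) = 0 := by
          rcases Nat.eq_zero_or_pos n with h | h
          · right; exact_mod_cast h
          · left
            apply mul_le_mul_of_nonneg_left _ (Nat.cast_nonneg n)
            exact_mod_cast h
        rcases this with h | h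
        · nlinarith
        · rw [h]; norm_num
      have hexp0 : Filter.Tendsto (fun n : ℕ => Real.exp (-(π * lamBar * (n:ℝ) ^ 2)))
          Filter.atTop (nhds 0) :=
        Real.tendsto_exp_atBot.comp (Filter.tendsto_neg_atTop_atBot.comp hsq)
      have hreal : Filter.Tendsto
          (fun n : ℕ => lam i / lamBar * (1 - Real.exp (-(π * lamBar * (n:ℝ) ^ 2))))
          Filter.atTop (nhds (lam i / lamBar)) := by
        have := (tendsto_const_nhds (x := (1:ℝ)) (f := Filter.atTop (α := ℕ))).sub hexp0
        have h2 := this.const_mul (lam i / lamBar)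
        simpa using h2
      exact ENNReal.tendsto_ofReal hreal
    exact tendsto_nhds_unique ht ht2
  constructor
  · intro r hr
    rw [cond_apply hAmeas ℙ, hmain r hr, hAval,
      ENNReal.ofReal_mul hq0.le, ← mul_assoc,
      ENNReal.inv_mul_cancel (by
        simp only [ne_eq, ENNReal.ofReal_eq_zero, not_le]
        exact hq0) ENNReal.ofReal_ne_top, one_mul]
  · intro r _
    have h := stmt2_deriv (π * lamBar) r
    convert h using 2 <;> ring
end

section
/- Let P be the uplink transmit power of a user with truncated channel-inversion power control: P = ρ R^η if R ≤ (P_u/ρ)^{1/η} and P = P_u otherwise, where R has PDF 2π λ̄ r exp(-π λ̄ r²). Then for ζ > 0, E[P^ζ] = ρ^ζ γ(ζη/2 + 1, π λ̄ (P_u/ρ)^{2/η}) / (π λ̄)^{ζη/2} + P_u^ζ exp(-π λ̄ (P_u/ρ)^{2/η}), where γ(·,·) is the lower incomplete gamma function. -/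
open MeasureTheory Real

/-- The lower incomplete gamma function `γ(s, x) = ∫₀ˣ t^(s-1) e^(-t) dt`. -/
noncomputable def lowerIncGamma (s x : ℝ) : ℝ :=
  ∫ t in Set.Ioc (0 : ℝ) x, t ^ (s - 1) * Real.exp (-t)

/-- For truncated channel-inversion power control
`P = ρ Rᵉᵗᵃ` if `R ≤ (P_u/ρ)^(1/η)` and `P = P_u` otherwise, where `R` has the
Rayleigh PDF `2π λ̄ r exp(-π λ̄ r²)`, the `ζ`-th moment of the transmit power is
`E[P^ζ] = ρ^ζ γ(ζη/2 + 1, π λ̄ (P_u/ρ)^(2/η)) / (π λ̄)^(ζη/2)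
          + P_u^ζ exp(-π λ̄ (P_u/ρ)^(2/η))` for `ζ > 0`. -/
theorem stmt11
    (lamBar Pu ρ η ζ : ℝ) (hlam : 0 < lamBar) (hPu : 0 < Pu) (hρ : 0 < ρ)
    (hη : 2 < η) (hζ : 0 < ζ) :
    ∫ r in Set.Ioi (0 : ℝ),
        (if r ≤ (Pu / ρ) ^ (1 / η) then ρ * r ^ η else Pu) ^ ζ
          * (2 * π * lamBar * r * Real.exp (-(π * lamBar * r ^ 2)))
      = ρ ^ ζ * lowerIncGamma (ζ * η / 2 + 1) (π * lamBar * (Pu / ρ) ^ (2 / η))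
          / (π * lamBar) ^ (ζ * η / 2)
        + Pu ^ ζ * Real.exp (-(π * lamBar * (Pu / ρ) ^ (2 / η))) := by
  have hπ : 0 < π := Real.pi_pos
  have ha : 0 < π * lamBar := mul_pos hπ hlam
  have hq : (0:ℝ) < Pu / ρ := div_pos hPu hρ
  have hηpos : (0:ℝ) < η := by linarith
  set c := (Pu / ρ) ^ (1 / η) with hc_def
  have hc : 0 < c := Real.rpow_pos_of_pos hq _
  have hc2 : (Pu / ρ) ^ (2 / η) = c ^ 2 := by
    rw [hc_def, ← Real.rpow_natCast ((Pu / ρ) ^ (1 / η)) 2, ← Real.rpow_mul hq.le]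
    congr 1
    push_cast
    ring
  set s := ζ * η / 2 with hs_def
  have hs : 0 < s := by positivity
  have h2s : (2:ℝ) * s = η * ζ := by rw [hs_def]; ring
  have has : (0:ℝ) < (π * lamBar) ^ s := Real.rpow_pos_of_pos ha s
  -- the true-branch integrand
  set f1 : ℝ → ℝ := fun r =>
    (ρ * r ^ η) ^ ζ * (2 * π * lamBar * r * Real.exp (-(π * lamBar * r ^ 2))) with hf1_def
  -- the false-branch integrand
  set f2 : ℝ → ℝ := fun r =>
    Pu ^ ζ * (2 * π * lamBar * r * Real.exp (-(π * lamBar * r ^ 2))) with hf2_def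
  set F : ℝ → ℝ := fun r =>
    (if r ≤ c then ρ * r ^ η else Pu) ^ ζ
      * (2 * π * lamBar * r * Real.exp (-(π * lamBar * r ^ 2))) with hF_def
  -- continuity facts
  have hcont1 : ∀ r : ℝ, ContinuousAt f1 r := by
    intro r
    have h1 : ContinuousAt (fun x : ℝ => x ^ η) r :=
      Real.continuousAt_rpow_const r η (Or.inr hηpos.le)
    have h2 : ContinuousAt (fun x : ℝ => x ^ ζ) (ρ * r ^ η) :=
      Real.continuousAt_rpow_const _ _ (Or.inr hζ.le)
    have h3 : ContinuousAt (fun x : ℝ =>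
        2 * π * lamBar * x * Real.exp (-(π * lamBar * x ^ 2))) r := by fun_prop
    have h1' : ContinuousAt (fun x : ℝ => ρ * x ^ η) r := continuousAt_const.mul h1
    have h4 : ContinuousAt (fun x : ℝ => (ρ * x ^ η) ^ ζ) r :=
      ContinuousAt.comp (f := fun x : ℝ => ρ * x ^ η) h2 h1'
    exact h4.mul h3
  have hint1 : IntegrableOn f1 (Set.Ioc 0 c) := by
    have : IntegrableOn f1 (Set.Icc 0 c) :=
      (ContinuousOn.integrableOn_Icc (fun r _ => (hcont1 r).continuousWithinAt))
    exact this.mono_set Set.Ioc_subset_Icc_self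
  have hFf1 : Set.EqOn F f1 (Set.Ioc 0 c) := by
    intro r hr
    simp only [hF_def, hf1_def, if_pos hr.2]
  have hFf2 : Set.EqOn F f2 (Set.Ioi c) := by
    intro r hr
    simp only [hF_def, hf2_def, if_neg (not_le.mpr (Set.mem_Ioi.mp hr))]
  -- tail: derivative facts
  have hderiv : ∀ r : ℝ, HasDerivAt (fun x : ℝ => -(Pu ^ ζ * Real.exp (-(π * lamBar * x ^ 2))))
      (f2 r) r := by
    intro r
    have h := ((((hasDerivAt_pow 2 r).const_mul (π * lamBar)).neg.exp.const_mul (Pu ^ ζ))).neg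
    refine h.congr_deriv ?_
    simp only [hf2_def, Pi.neg_apply]
    ring
  have hpos : ∀ r ∈ Set.Ioi c, 0 ≤ f2 r := by
    intro r hr
    have hr0 : 0 < r := hc.trans hr
    simp only [hf2_def]
    positivity
  have htend : Filter.Tendsto (fun x : ℝ => -(Pu ^ ζ * Real.exp (-(π * lamBar * x ^ 2))))
      Filter.atTop (nhds 0) := by
    have h1 : Filter.Tendsto (fun x : ℝ => -(π * lamBar * x ^ 2)) Filter.atTop Filter.atBot := by
      apply Filter.tendsto_neg_atTop_atBot.comp
      exact (Filter.tendsto_pow_atTop (by norm_num : (2:ℕ) ≠ 0)).const_mul_atTop ha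
    have h2 := (Real.tendsto_exp_atBot.comp h1).const_mul (Pu ^ ζ)
    simpa using h2.neg
  have hint2 : IntegrableOn f2 (Set.Ioi c) :=
    integrableOn_Ioi_deriv_of_nonneg (hderiv c).continuousAt.continuousWithinAt
      (fun r _ => hderiv r) hpos htend
  have htail : ∫ r in Set.Ioi c, f2 r = Pu ^ ζ * Real.exp (-(π * lamBar * c ^ 2)) := by
    rw [integral_Ioi_of_hasDerivAt_of_nonneg (hderiv c).continuousAt.continuousWithinAt
      (fun r _ => hderiv r) hpos htend]
    ring
  -- substitution for the head
  have hgcont : Continuous (fun t : ℝ => t ^ s * Real.exp (-t)) := by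
    have h1 : Continuous fun t : ℝ => t ^ s :=
      continuous_iff_continuousAt.mpr fun t => Real.continuousAt_rpow_const t s (Or.inr hs.le)
    exact h1.mul (Real.continuous_exp.comp continuous_neg)
  have hfd : ∀ x ∈ Set.uIcc (0:ℝ) c, HasDerivAt (fun r : ℝ => π * lamBar * r ^ 2)
      (2 * (π * lamBar) * x) x := by
    intro x _
    have h := (hasDerivAt_pow 2 x).const_mul (π * lamBar)
    refine h.congr_deriv ?_
    ring
  have hsub := intervalIntegral.integral_comp_smul_deriv (a := (0:ℝ)) (b := c)
    (f := fun r : ℝ => π * lamBar * r ^ 2) (f' := fun r : ℝ => 2 * (π * lamBar) * r)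
    (g := fun t : ℝ => t ^ s * Real.exp (-t)) hfd (by fun_prop) hgcont
  simp only [Function.comp] at hsub
  have h0 : π * lamBar * (0:ℝ) ^ 2 = 0 := by ring
  rw [h0] at hsub
  -- head computation
  have hXpos : (0:ℝ) ≤ π * lamBar * c ^ 2 := by positivity
  have hgam : lowerIncGamma (s + 1) (π * lamBar * c ^ 2)
      = ∫ t in (0:ℝ)..(π * lamBar * c ^ 2), t ^ s * Real.exp (-t) := by
    rw [lowerIncGamma, intervalIntegral.integral_of_le hXpos]
    simp
  have hptwise : ∀ r ∈ Set.Ioc (0:ℝ) c, f1 r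
      = (ρ ^ ζ / (π * lamBar) ^ s)
        * ((2 * (π * lamBar) * r) • ((π * lamBar * r ^ 2) ^ s * Real.exp (-(π * lamBar * r ^ 2)))) := by
    intro r hr
    have hr0 : 0 < r := hr.1
    have e1 : (ρ * r ^ η) ^ ζ = ρ ^ ζ * r ^ (η * ζ) := by
      rw [Real.mul_rpow hρ.le (Real.rpow_nonneg hr0.le η), ← Real.rpow_mul hr0.le]
    have e2 : (π * lamBar * r ^ 2) ^ s = (π * lamBar) ^ s * r ^ (η * ζ) := by
      rw [Real.mul_rpow ha.le (by positivity), ← Real.rpow_natCast r 2,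
        ← Real.rpow_mul hr0.le]
      norm_num [h2s]
    simp only [hf1_def, smul_eq_mul, e1, e2]
    field_simp
  have hhead : ∫ r in Set.Ioc (0:ℝ) c, f1 r
      = ρ ^ ζ * lowerIncGamma (s + 1) (π * lamBar * c ^ 2) / (π * lamBar) ^ s := by
    rw [setIntegral_congr_fun measurableSet_Ioc hptwise, integral_const_mul,
      ← intervalIntegral.integral_of_le hc.le, hsub, hgam]
    ring
  -- assemble
  have hsplit : Set.Ioi (0:ℝ) = Set.Ioc 0 c ∪ Set.Ioi c := (Set.Ioc_union_Ioi_eq_Ioi hc.le).symm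
  have hintF1 : IntegrableOn F (Set.Ioc 0 c) :=
    hint1.congr_fun (fun r hr => (hFf1 hr).symm) measurableSet_Ioc
  have hintF2 : IntegrableOn F (Set.Ioi c) :=
    hint2.congr_fun (fun r hr => (hFf2 hr).symm) measurableSet_Ioi
  calc ∫ r in Set.Ioi (0:ℝ), F r
      = (∫ r in Set.Ioc (0:ℝ) c, F r) + ∫ r in Set.Ioi c, F r := by
        rw [hsplit, setIntegral_union (Set.Ioc_disjoint_Ioi le_rfl) measurableSet_Ioi hintF1 hintF2]
    _ = (∫ r in Set.Ioc (0:ℝ) c, f1 r) + ∫ r in Set.Ioi c, f2 r := by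
        rw [setIntegral_congr_fun measurableSet_Ioc hFf1,
          setIntegral_congr_fun measurableSet_Ioi hFf2]
    _ = ρ ^ ζ * lowerIncGamma (s + 1) (π * lamBar * c ^ 2) / (π * lamBar) ^ s
        + Pu ^ ζ * Real.exp (-(π * lamBar * c ^ 2)) := by rw [hhead, htail]
    _ = ρ ^ ζ * lowerIncGamma (ζ * η / 2 + 1) (π * lamBar * (Pu / ρ) ^ (2 / η))
          / (π * lamBar) ^ (ζ * η / 2)
        + Pu ^ ζ * Real.exp (-(π * lamBar * (Pu / ρ) ^ (2 / η))) := by rw [hc2]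
end
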